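/- Fix integers t ≥ 0 and n_0 ≥ 1, and assume that for every m ≥ n_0, every m-element set B of positive integers that is sumset-distinct modulo 2^m + t satisfies max B ≥ (2^m + t)/3. Let A = {a_1, a_2, …, a_n} with a_1 < a_2 < … < a_n be an n-element set of positive integers all of whose 2^n subset sums are pairwise distinct (as integers), and suppose a_1 + a_2 + … + a_n < 2^n + t. Then for every index i with n_0 ≤ i ≤ n, we have 2^{i-1} ≤ a_i ≤ 2^{i-1} + t. -/

import Mathlib

/-- An `n`-element set `A` of positive integers is *sumset-distinct modulo `N`*
if all subset sums (including the empty sum) are pairwise distinct modulo `N`. -/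
def SumsetDistinctMod (N : ℕ) (A : Finset ℕ) : Prop :=
  ∀ B ⊆ A, ∀ C ⊆ A, (∑ x ∈ B, x) % N = (∑ x ∈ C, x) % N → B = C

namespace Stmt2Aux

variable {n : ℕ}

/-- The finset of indices `< k` in `Fin n`. -/
def idx (n k : ℕ) : Finset (Fin n) := Finset.univ.filter (fun j : Fin n => (j : ℕ) < k)

/-- Sum of the first `k` elements. -/
def Sp (a : Fin n → ℕ) (k : ℕ) : ℕ := ∑ j ∈ idx n k, a j

lemma mem_idx {k : ℕ} {j : Fin n} : j ∈ idx n k ↔ (j : ℕ) < k := by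
  simp [idx]

lemma card_idx {k : ℕ} (hk : k ≤ n) : (idx n k).card = k := by
  refine Eq.trans ?_ (Finset.card_range k)
  apply Finset.card_bij (fun (j : Fin n) _ => (j : ℕ))
  · intro j hj
    rw [Finset.mem_range]
    exact mem_idx.mp hj
  · intro j1 h1 j2 h2 h
    exact Fin.ext h
  · intro m hm
    have hmk : m < k := Finset.mem_range.mp hm
    exact ⟨⟨m, lt_of_lt_of_le hmk hk⟩, mem_idx.mpr hmk, rfl⟩

lemma sum_subset_le {a : Fin n → ℕ} {k : ℕ} {B : Finset (Fin n)} (hB : B ⊆ idx n k) :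
    ∑ j ∈ B, a j ≤ Sp a k :=
  Finset.sum_le_sum_of_subset hB

lemma idx_succ {k : ℕ} (hk : k < n) : idx n (k + 1) = insert ⟨k, hk⟩ (idx n k) := by
  ext j
  rw [Finset.mem_insert, mem_idx, mem_idx]
  constructor
  · intro h
    rcases Nat.lt_succ_iff_lt_or_eq.mp h with h' | h'
    · exact Or.inr h'
    · exact Or.inl (Fin.ext h')
  · rintro (rfl | h)
    · exact Nat.lt_succ_self k
    · exact Nat.lt_succ_of_lt h

lemma Sp_succ {a : Fin n → ℕ} {k : ℕ} (hk : k < n) :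
    Sp a (k + 1) = a ⟨k, hk⟩ + Sp a k := by
  rw [Sp, idx_succ hk, Finset.sum_insert]
  · rfl
  · intro hmem
    exact absurd (mem_idx.mp hmem) (lt_irrefl k)

/-- Fact A: the first `k` elements have at least `2^k - 1` total sum. -/
lemma fact_A {a : Fin n → ℕ}
    (hdss : ∀ B C : Finset (Fin n), ∑ i ∈ B, a i = ∑ i ∈ C, a i → B = C)
    {k : ℕ} (hk : k ≤ n) : 2 ^ k ≤ Sp a k + 1 := by
  have h1 : ((idx n k).powerset.card) = 2 ^ k := by
    rw [Finset.card_powerset, card_idx hk]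
  have h2 : (idx n k).powerset.card ≤ (Finset.range (Sp a k + 1)).card := by
    apply Finset.card_le_card_of_injOn (fun B => ∑ j ∈ B, a j)
    · intro B hB
      rw [Finset.mem_coe, Finset.mem_range, Nat.lt_succ_iff]
      exact sum_subset_le (Finset.mem_powerset.mp hB)
    · intro B _ C _ h
      exact hdss B C h
  rw [h1, Finset.card_range] at h2
  exact h2

/-- Key lemma: if the `(k+1)`-st element is `< 2^k`, then the earlier elements
sum to at least twice it. -/
lemma key_lemma {a : Fin n → ℕ}
    (hdss : ∀ B C : Finset (Fin n), ∑ i ∈ B, a i = ∑ i ∈ C, a i → B = C)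
    {k : ℕ} (hk : k < n) (hsmall : a ⟨k, hk⟩ < 2 ^ k) :
    2 * a ⟨k, hk⟩ ≤ Sp a k := by
  by_contra hcon
  push_neg at hcon
  set A := a ⟨k, hk⟩ with hA
  -- injective map from subsets of idx n k into Ico A (2*A)
  have h2 : (idx n k).powerset.card ≤ (Finset.Ico A (2 * A)).card := by
    apply Finset.card_le_card_of_injOn
      (fun B => if (∑ j ∈ B, a j) < A then (∑ j ∈ B, a j) + A else (∑ j ∈ B, a j))
    · intro B hB
      have hsub := Finset.mem_powerset.mp hB
      have hle : ∑ j ∈ B, a j ≤ Sp a k := sum_subset_le hsub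
      rw [Finset.mem_coe, Finset.mem_Ico]
      beta_reduce
      by_cases hlt : (∑ j ∈ B, a j) < A
      · rw [if_pos hlt]
        omega
      · rw [if_neg hlt]
        omega
    · intro B hB C hC h
      have hsubB := Finset.mem_powerset.mp hB
      have hsubC := Finset.mem_powerset.mp hC
      simp only at h
      have hknotB : (⟨k, hk⟩ : Fin n) ∉ B := by
        intro hmem
        exact absurd (mem_idx.mp (hsubB hmem)) (lt_irrefl k)
      have hknotC : (⟨k, hk⟩ : Fin n) ∉ C := by
        intro hmem
        exact absurd (mem_idx.mp (hsubC hmem)) (lt_irrefl k)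
      by_cases h1 : (∑ j ∈ B, a j) < A <;> by_cases h2 : (∑ j ∈ C, a j) < A
      · rw [if_pos h1, if_pos h2] at h
        exact hdss B C (by omega)
      · -- B shifted, C not: insert k into B equals C, contradiction
        rw [if_pos h1, if_neg h2] at h
        have hsum : ∑ j ∈ insert (⟨k, hk⟩ : Fin n) B, a j = ∑ j ∈ C, a j := by
          rw [Finset.sum_insert hknotB]
          omega
        have := hdss _ _ hsum
        have : (⟨k, hk⟩ : Fin n) ∈ C := this ▸ Finset.mem_insert_self _ _
        exact absurd (mem_idx.mp (hsubC this)) (lt_irrefl k)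
      · rw [if_neg h1, if_pos h2] at h
        have hsum : ∑ j ∈ insert (⟨k, hk⟩ : Fin n) C, a j = ∑ j ∈ B, a j := by
          rw [Finset.sum_insert hknotC]
          omega
        have := hdss _ _ hsum
        have : (⟨k, hk⟩ : Fin n) ∈ B := this ▸ Finset.mem_insert_self _ _
        exact absurd (mem_idx.mp (hsubB this)) (lt_irrefl k)
      · rw [if_neg h1, if_neg h2] at h
        exact hdss B C h
  rw [Finset.card_powerset, card_idx (le_of_lt hk), Nat.card_Ico] at h2
  omega

/-- The image of the first `k` elements is sumset-distinct mod any `N > Sp a k`. -/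
lemma sd_image {a : Fin n → ℕ} (hmono : StrictMono a)
    (hdss : ∀ B C : Finset (Fin n), ∑ i ∈ B, a i = ∑ i ∈ C, a i → B = C)
    {N k : ℕ} (hS : Sp a k < N) :
    SumsetDistinctMod N (Finset.image a (idx n k)) := by
  intro B hB C hC hmod
  have hinj : Function.Injective a := hmono.injective
  set JB := (idx n k).filter (fun j => a j ∈ B) with hJBdef
  set JC := (idx n k).filter (fun j => a j ∈ C) with hJCdef
  have himB : Finset.image a JB = B := by
    ext x
    constructor
    · intro hx
      obtain ⟨j, hj, rfl⟩ := Finset.mem_image.mp hx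
      exact (Finset.mem_filter.mp hj).2
    · intro hx
      obtain ⟨j, hj, rfl⟩ := Finset.mem_image.mp (hB hx)
      exact Finset.mem_image.mpr ⟨j, Finset.mem_filter.mpr ⟨hj, hx⟩, rfl⟩
  have himC : Finset.image a JC = C := by
    ext x
    constructor
    · intro hx
      obtain ⟨j, hj, rfl⟩ := Finset.mem_image.mp hx
      exact (Finset.mem_filter.mp hj).2
    · intro hx
      obtain ⟨j, hj, rfl⟩ := Finset.mem_image.mp (hC hx)
      exact Finset.mem_image.mpr ⟨j, Finset.mem_filter.mpr ⟨hj, hx⟩, rfl⟩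
  have hsumB : ∑ x ∈ B, x = ∑ j ∈ JB, a j := by
    rw [← himB]
    exact Finset.sum_image (fun i _ j _ h => hinj h)
  have hsumC : ∑ x ∈ C, x = ∑ j ∈ JC, a j := by
    rw [← himC]
    exact Finset.sum_image (fun i _ j _ h => hinj h)
  have hboundB : ∑ j ∈ JB, a j < N :=
    lt_of_le_of_lt (sum_subset_le (Finset.filter_subset _ _)) hS
  have hboundC : ∑ j ∈ JC, a j < N :=
    lt_of_le_of_lt (sum_subset_le (Finset.filter_subset _ _)) hS
  rw [hsumB, hsumC, Nat.mod_eq_of_lt hboundB, Nat.mod_eq_of_lt hboundC] at hmod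
  have : JB = JC := hdss _ _ hmod
  rw [← himB, ← himC, this]

end Stmt2Aux

open Stmt2Aux in
theorem stmt2 (t n₀ : ℕ) (hn₀ : 1 ≤ n₀)
    (H : ∀ m : ℕ, n₀ ≤ m → ∀ B : Finset ℕ, (∀ b ∈ B, 0 < b) → B.card = m →
      SumsetDistinctMod (2 ^ m + t) B → ∀ hB : B.Nonempty,
        ((2 ^ m + t : ℕ) : ℝ) / 3 ≤ (B.max' hB : ℝ))
    (n : ℕ) (a : Fin n → ℕ) (hmono : StrictMono a) (hpos : ∀ i, 0 < a i)
    (hdss : ∀ B C : Finset (Fin n), ∑ i ∈ B, a i = ∑ i ∈ C, a i → B = C)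
    (hsum : ∑ i, a i < 2 ^ n + t) :
    ∀ i : Fin n, n₀ ≤ (i : ℕ) + 1 → 2 ^ (i : ℕ) ≤ a i ∧ a i ≤ 2 ^ (i : ℕ) + t := by
  -- The key step: if Sp a (k+1) < 2^(k+1) + t and n₀ ≤ k+1 then 2^k ≤ a ⟨k, _⟩
  have step : ∀ k : ℕ, ∀ hk : k < n, n₀ ≤ k + 1 → Sp a (k + 1) < 2 ^ (k + 1) + t →
      2 ^ k ≤ a ⟨k, hk⟩ := by
    intro k hk hn₀k hS
    by_contra hcon
    push_neg at hcon
    have hkey : 2 * a ⟨k, hk⟩ ≤ Sp a k := key_lemma hdss hk hcon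
    have h3 : 3 * a ⟨k, hk⟩ ≤ Sp a (k + 1) := by
      rw [Sp_succ hk]
      omega
    -- Apply H to the image of the first k+1 elements
    set N := 2 ^ (k + 1) + t with hN
    set B := Finset.image a (idx n (k + 1)) with hBdef
    have hk1n : k + 1 ≤ n := hk
    have hcard : B.card = k + 1 := by
      rw [hBdef, Finset.card_image_of_injective _ hmono.injective, card_idx hk1n]
    have hposB : ∀ b ∈ B, 0 < b := by
      intro b hb
      obtain ⟨j, _, rfl⟩ := Finset.mem_image.mp hb
      exact hpos j
    have hsd : SumsetDistinctMod N B := sd_image hmono hdss hS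
    have hkmem : (⟨k, hk⟩ : Fin n) ∈ idx n (k + 1) := mem_idx.mpr (Nat.lt_succ_self k)
    have hne : B.Nonempty := ⟨a ⟨k, hk⟩, Finset.mem_image.mpr ⟨⟨k, hk⟩, hkmem, rfl⟩⟩
    have hmax : B.max' hne = a ⟨k, hk⟩ := by
      apply le_antisymm
      · apply Finset.max'_le
        intro y hy
        obtain ⟨j, hj, rfl⟩ := Finset.mem_image.mp hy
        have hjk : (j : ℕ) < k + 1 := mem_idx.mp hj
        have : j ≤ (⟨k, hk⟩ : Fin n) := by
          rw [Fin.le_def]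
          exact Nat.lt_succ_iff.mp hjk
        exact hmono.monotone this
      · exact Finset.le_max' B (a ⟨k, hk⟩) (Finset.mem_image.mpr ⟨⟨k, hk⟩, hkmem, rfl⟩)
    have hHH := H (k + 1) hn₀k B hposB hcard hsd hne
    rw [hmax] at hHH
    have hNle : (N : ℝ) ≤ 3 * (a ⟨k, hk⟩ : ℝ) := by
      rw [div_le_iff₀ (by norm_num : (0:ℝ) < 3)] at hHH
      linarith
    have hNle' : N ≤ 3 * a ⟨k, hk⟩ := by exact_mod_cast hNle
    omega
  -- Downward induction: Sp a k < 2^k + t for all n₀ ≤ k ≤ n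
  have claim : ∀ m k : ℕ, k + m = n → n₀ ≤ k → Sp a k < 2 ^ k + t := by
    intro m
    induction m with
    | zero =>
      intro k hkn _
      have hkn' : k = n := by omega
      rw [hkn']
      have : idx n n = Finset.univ := by
        ext j
        simp [mem_idx, j.isLt]
      rw [Sp, this]
      exact hsum
    | succ m ih =>
      intro k hkn hn₀k
      have hk1 : (k + 1) + m = n := by omega
      have ih1 : Sp a (k + 1) < 2 ^ (k + 1) + t := ih (k + 1) hk1 (le_trans hn₀k (Nat.le_succ k))
      have hkltn : k < n := by omega
      have hlow : 2 ^ k ≤ a ⟨k, hkltn⟩ := step k hkltn (le_trans hn₀k (Nat.le_succ k)) ih1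
      have hsplit : Sp a (k + 1) = a ⟨k, hkltn⟩ + Sp a k := Sp_succ hkltn
      have hpow : (2:ℕ) ^ (k + 1) = 2 * 2 ^ k := by ring
      omega
  intro i hi
  have hkn : (i : ℕ) < n := i.isLt
  have hk1n : (i : ℕ) + 1 ≤ n := hkn
  have hS1 : Sp a ((i : ℕ) + 1) < 2 ^ ((i : ℕ) + 1) + t :=
    claim (n - ((i : ℕ) + 1)) ((i : ℕ) + 1) (by omega) hi
  have hieq : (⟨(i : ℕ), hkn⟩ : Fin n) = i := Fin.eta i hkn
  constructor
  · have := step (i : ℕ) hkn hi hS1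
    rwa [hieq] at this
  · have hA : 2 ^ (i : ℕ) ≤ Sp a (i : ℕ) + 1 := fact_A hdss (le_of_lt hkn)
    have hsplit : Sp a ((i : ℕ) + 1) = a ⟨(i : ℕ), hkn⟩ + Sp a (i : ℕ) := Sp_succ hkn
    rw [hieq] at hsplit
    have hpow : (2:ℕ) ^ ((i : ℕ) + 1) = 2 * 2 ^ (i : ℕ) := by ring
    omega
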